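/- (Two-sided bound in the double-loop Peng's Q(λ) analysis.) Fix λ ∈ [0,1]. Let (Q_k)_{k≥0}, (μ_k)_{k≥0}, (δ_k)_{k≥0}, (ε_k)_{k≥0} be such that: each δ_k : X → ℝ is nonnegative; each μ_k is δ_k-greedy with respect to Q_k, i.e. (μ_k Q_k)(x) ≥ max_a Q_k x a − δ_k(x) for all x; and for each k, Q_{k+1} − ε_k is the unique fixed point of λ T^{μ_k} + (1−λ) T. Then for every k ≥ 0, Q^{μ_k} − ‖ε_k‖∞·𝟙 ≤ Q_{k+1} ≤ Q^{μ_{k+1}} + ((1+γ)/(1−γ))·‖ε_k‖∞·𝟙 + (γ/(1−γ))·‖δ_{k+1}‖∞·𝟙 pointwise. -/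

import Mathlib

open scoped BigOperators

namespace RLPQL

variable {X A : Type*} [Fintype X] [Fintype A]

/-- `P` is a transition kernel: nonnegative and rows sum to one. -/
def IsKernel (P : X → A → X → ℝ) : Prop :=
  (∀ x a y, 0 ≤ P x a y) ∧ ∀ x a, ∑ y, P x a y = 1

/-- `π` is a (Markov) policy: nonnegative and sums to one over actions. -/
def IsPolicy (π : X → A → ℝ) : Prop :=
  (∀ x a, 0 ≤ π x a) ∧ ∀ x, ∑ a, π x a = 1

/-- `(πQ)(x) = ∑_a π x a * Q x a`. -/
def polQ (π Q : X → A → ℝ) : X → ℝ := fun x => ∑ a, π x a * Q x a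

/-- `(PV)(x,a) = ∑_y P x a y * V y`. -/
def PV (P : X → A → X → ℝ) (V : X → ℝ) : X → A → ℝ := fun x a => ∑ y, P x a y * V y

/-- `P^π Q = P (π Q)`. -/
def Ppol (P : X → A → X → ℝ) (π Q : X → A → ℝ) : X → A → ℝ := PV P (polQ π Q)

/-- Bellman operator `T^π Q = r + γ P^π Q`. -/
def bellman (P : X → A → X → ℝ) (r : X → A → ℝ) (γ : ℝ) (π Q : X → A → ℝ) : X → A → ℝ :=
  fun x a => r x a + γ * Ppol P π Q x a

/-- Bellman optimality operator `(T Q)(x,a) = r x a + γ ∑_y P x a y * max_b Q y b`. -/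
noncomputable def optBellman (P : X → A → X → ℝ) (r : X → A → ℝ) (γ : ℝ) (Q : X → A → ℝ) :
    X → A → ℝ :=
  fun x a => r x a + γ * ∑ y, P x a y * (⨆ b, Q y b)

/-- `π` is greedy with respect to `Q`. -/
def IsGreedy (π Q : X → A → ℝ) : Prop := ∀ x, polQ π Q x = ⨆ a, Q x a

/-- `(I - c P^μ)⁻¹ f = ∑_{t=0}^∞ c^t (P^μ)^t f`. -/
noncomputable def resolvent (P : X → A → X → ℝ) (c : ℝ) (μ : X → A → ℝ) (f : X → A → ℝ) :
    X → A → ℝ :=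
  fun x a => ∑' t : ℕ, c ^ t * ((Ppol P μ)^[t] f) x a

/-- Peng's Q(λ) operator `N_λ^{μ,π} Q = (I - γλ P^μ)⁻¹ (r + γ(1-λ) P^π Q)`. -/
noncomputable def peng (P : X → A → X → ℝ) (r : X → A → ℝ) (γ lam : ℝ) (μ π Q : X → A → ℝ) :
    X → A → ℝ :=
  resolvent P (γ * lam) μ (fun x a => r x a + γ * (1 - lam) * Ppol P π Q x a)

/-- The mixture policy `c·μ + (1-c)·π`. -/
def mixP (c : ℝ) (μ π : X → A → ℝ) : X → A → ℝ := fun x a => c * μ x a + (1 - c) * π x a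

end RLPQL


open RLPQL

section Helpers

variable {X A : Type*} [Fintype X] [Fintype A]

private lemma aux_polQ_le_sup [Nonempty A] {π : X → A → ℝ} (hπ : IsPolicy π)
    (Q : X → A → ℝ) (x : X) : polQ π Q x ≤ ⨆ a, Q x a := by
  have hb : BddAbove (Set.range (Q x)) := (Set.finite_range _).bddAbove
  calc polQ π Q x = ∑ a, π x a * Q x a := rfl
    _ ≤ ∑ a, π x a * (⨆ b, Q x b) :=
        Finset.sum_le_sum fun a _ => mul_le_mul_of_nonneg_left (le_ciSup hb a) (hπ.1 x a)
    _ = (∑ a, π x a) * (⨆ b, Q x b) := (Finset.sum_mul ..).symm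
    _ = ⨆ b, Q x b := by rw [hπ.2 x, one_mul]

private lemma aux_sum_shift {P : X → A → X → ℝ} (hP : IsKernel P) (V : X → ℝ) (c : ℝ)
    (x : X) (a : A) : ∑ y, P x a y * (V y + c) = (∑ y, P x a y * V y) + c := by
  calc ∑ y, P x a y * (V y + c) = ∑ y, (P x a y * V y + P x a y * c) := by
        simp [mul_add]
    _ = (∑ y, P x a y * V y) + (∑ y, P x a y) * c := by
        rw [Finset.sum_add_distrib, Finset.sum_mul]
    _ = (∑ y, P x a y * V y) + c := by rw [hP.2 x a, one_mul]

private lemma aux_polQ_shift {π : X → A → ℝ} (hπ : IsPolicy π) (Q : X → A → ℝ) (c : ℝ)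
    (x : X) : polQ π (fun x a => Q x a + c) x = polQ π Q x + c := by
  unfold polQ
  calc ∑ a, π x a * (Q x a + c) = ∑ a, (π x a * Q x a + π x a * c) := by simp [mul_add]
    _ = (∑ a, π x a * Q x a) + (∑ a, π x a) * c := by
        rw [Finset.sum_add_distrib, Finset.sum_mul]
    _ = (∑ a, π x a * Q x a) + c := by rw [hπ.2 x, one_mul]

private lemma aux_bellman_mono {P : X → A → X → ℝ} (hP : IsKernel P) {r : X → A → ℝ}
    {γ : ℝ} (hγ : 0 ≤ γ) {π : X → A → ℝ} (hπ : IsPolicy π) {Q Q' : X → A → ℝ}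
    (h : ∀ x a, Q x a ≤ Q' x a) (x : X) (a : A) :
    bellman P r γ π Q x a ≤ bellman P r γ π Q' x a := by
  unfold bellman Ppol PV polQ
  have hsum : ∀ y : X, ∑ b, π y b * Q y b ≤ ∑ b, π y b * Q' y b := fun y =>
    Finset.sum_le_sum fun b _ => mul_le_mul_of_nonneg_left (h y b) (hπ.1 y b)
  exact (add_le_add_iff_left _).2 (mul_le_mul_of_nonneg_left (Finset.sum_le_sum fun y _ =>
    mul_le_mul_of_nonneg_left (hsum y) (hP.1 x a y)) hγ)

private lemma aux_bellman_shift {P : X → A → X → ℝ} (hP : IsKernel P) (r : X → A → ℝ)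
    (γ : ℝ) {π : X → A → ℝ} (hπ : IsPolicy π) (Q : X → A → ℝ) (c : ℝ) (x : X) (a : A) :
    bellman P r γ π (fun x a => Q x a + c) x a = bellman P r γ π Q x a + γ * c := by
  unfold bellman Ppol PV
  have h1 : ∀ y, polQ π (fun x a => Q x a + c) y = polQ π Q y + c := aux_polQ_shift hπ Q c
  simp_rw [h1, aux_sum_shift hP (polQ π Q) c x a]
  ring

private lemma aux_bellman_le_opt [Nonempty A] {P : X → A → X → ℝ} (hP : IsKernel P)
    (r : X → A → ℝ) {γ : ℝ} (hγ : 0 ≤ γ) {π : X → A → ℝ} (hπ : IsPolicy π)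
    (Q : X → A → ℝ) (x : X) (a : A) :
    bellman P r γ π Q x a ≤ optBellman P r γ Q x a := by
  unfold bellman optBellman Ppol PV
  exact (add_le_add_iff_left _).2 (mul_le_mul_of_nonneg_left (Finset.sum_le_sum fun y _ =>
    mul_le_mul_of_nonneg_left (aux_polQ_le_sup hπ Q y) (hP.1 x a y)) hγ)

private lemma aux_opt_mono [Nonempty A] {P : X → A → X → ℝ} (hP : IsKernel P)
    (r : X → A → ℝ) {γ : ℝ} (hγ : 0 ≤ γ) {Q Q' : X → A → ℝ}
    (h : ∀ x a, Q x a ≤ Q' x a) (x : X) (a : A) :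
    optBellman P r γ Q x a ≤ optBellman P r γ Q' x a := by
  unfold optBellman
  have hsup : ∀ y : X, (⨆ b, Q y b) ≤ ⨆ b, Q' y b := fun y =>
    ciSup_le fun b => (h y b).trans (le_ciSup (Set.finite_range _).bddAbove b)
  exact (add_le_add_iff_left _).2 (mul_le_mul_of_nonneg_left (Finset.sum_le_sum fun y _ =>
    mul_le_mul_of_nonneg_left (hsup y) (hP.1 x a y)) hγ)

private lemma aux_opt_shift [Nonempty A] {P : X → A → X → ℝ} (hP : IsKernel P)
    (r : X → A → ℝ) (γ : ℝ) (Q : X → A → ℝ) (c : ℝ) (x : X) (a : A) :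
    optBellman P r γ (fun x a => Q x a + c) x a = optBellman P r γ Q x a + γ * c := by
  unfold optBellman
  have h1 : ∀ y : X, (⨆ b, Q y b + c) = (⨆ b, Q y b) + c := fun y =>
    (ciSup_add (Set.finite_range _).bddAbove c).symm
  simp_rw [h1, aux_sum_shift hP (fun y => ⨆ b, Q y b) c x a]
  ring

private lemma aux_opt_le_bellman_add [Nonempty A] {P : X → A → X → ℝ} (hP : IsKernel P)
    (r : X → A → ℝ) {γ : ℝ} (hγ : 0 ≤ γ) {μ Q : X → A → ℝ} {d : ℝ}
    (h : ∀ y, (⨆ b, Q y b) ≤ polQ μ Q y + d) (x : X) (a : A) :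
    optBellman P r γ Q x a ≤ bellman P r γ μ Q x a + γ * d := by
  unfold optBellman bellman Ppol PV
  have h1 : ∑ y, P x a y * (⨆ b, Q y b) ≤ ∑ y, P x a y * (polQ μ Q y + d) :=
    Finset.sum_le_sum fun y _ => mul_le_mul_of_nonneg_left (h y) (hP.1 x a y)
  have h2 : ∑ y, P x a y * (polQ μ Q y + d) = (∑ y, P x a y * polQ μ Q y) + d :=
    aux_sum_shift hP (polQ μ Q) d x a
  rw [h2] at h1
  nlinarith [mul_le_mul_of_nonneg_left h1 hγ]

end Helpers


/-- Two-sided bound in the double-loop Peng's Q(λ) analysis: if each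
`μ_k` is `δ_k`-greedy w.r.t. `Q_k` and `Q_{k+1} - ε_k` is the unique fixed point of
`λT^{μ_k} + (1-λ)T`, then for every `k`,
`Q^{μ_k} - ‖ε_k‖∞·𝟙 ≤ Q_{k+1} ≤ Q^{μ_{k+1}} + ((1+γ)/(1-γ))‖ε_k‖∞·𝟙 + (γ/(1-γ))‖δ_{k+1}‖∞·𝟙`
pointwise. `Qof π` denotes the unique fixed point of `T^π`. -/
theorem double_loop_peng_two_sided {X A : Type*} [Fintype X] [Fintype A]
    [Nonempty X] [Nonempty A]
    (P : X → A → X → ℝ) (r : X → A → ℝ) (γ lam : ℝ)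
    (hP : IsKernel P) (hγ0 : 0 ≤ γ) (hγ1 : γ < 1) (hlam0 : 0 ≤ lam) (hlam1 : lam ≤ 1)
    (Qof : (X → A → ℝ) → (X → A → ℝ))
    (hQof : ∀ π : X → A → ℝ, IsPolicy π → bellman P r γ π (Qof π) = Qof π)
    (Qseq μseq : ℕ → X → A → ℝ) (δseq : ℕ → X → ℝ) (ε : ℕ → X → A → ℝ)
    (hμpol : ∀ k, IsPolicy (μseq k))
    (hδ : ∀ k x, 0 ≤ δseq k x)
    (hδgreedy : ∀ k x, (⨆ a, Qseq k x a) - δseq k x ≤ polQ (μseq k) (Qseq k) x)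
    (hfix : ∀ k, (fun x a => lam * bellman P r γ (μseq k) (Qseq (k + 1) - ε k) x a
        + (1 - lam) * optBellman P r γ (Qseq (k + 1) - ε k) x a) = Qseq (k + 1) - ε k) :
    ∀ k : ℕ,
      ((fun x a => Qof (μseq k) x a - ‖ε k‖) ≤ Qseq (k + 1)) ∧
      Qseq (k + 1) ≤ fun x a => Qof (μseq (k + 1)) x a
          + ((1 + γ) / (1 - γ)) * ‖ε k‖ + (γ / (1 - γ)) * ‖δseq (k + 1)‖ := by
  intro k
  have hfixk : ∀ x a, lam * bellman P r γ (μseq k) (Qseq (k + 1) - ε k) x a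
      + (1 - lam) * optBellman P r γ (Qseq (k + 1) - ε k) x a
      = (Qseq (k + 1) - ε k) x a := fun x a => congrFun (congrFun (hfix k) x) a
  have hTle : ∀ x a, bellman P r γ (μseq k) (Qseq (k + 1) - ε k) x a
      ≤ optBellman P r γ (Qseq (k + 1) - ε k) x a :=
    aux_bellman_le_opt hP r hγ0 (hμpol k) _
  have hTB_le_B : ∀ x a, bellman P r γ (μseq k) (Qseq (k + 1) - ε k) x a
      ≤ (Qseq (k + 1) - ε k) x a := by
    intro x a
    have h1 := hfixk x a
    nlinarith [mul_nonneg (sub_nonneg.2 hlam1) (sub_nonneg.2 (hTle x a))]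
  have hB_le_TB : ∀ x a, (Qseq (k + 1) - ε k) x a
      ≤ optBellman P r γ (Qseq (k + 1) - ε k) x a := by
    intro x a
    have h1 := hfixk x a
    nlinarith [mul_nonneg hlam0 (sub_nonneg.2 (hTle x a))]
  have hBapp : ∀ x a, (Qseq (k + 1) - ε k) x a = Qseq (k + 1) x a - ε k x a := by
    intro x a; simp
  have hεabs : ∀ x a, |ε k x a| ≤ ‖ε k‖ := by
    intro x a
    have h1 : ‖ε k x a‖ ≤ ‖ε k x‖ := norm_le_pi_norm (ε k x) a
    have h2 : ‖ε k x‖ ≤ ‖ε k‖ := norm_le_pi_norm (ε k) x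
    simpa using h1.trans h2
  have hδabs : ∀ x, δseq (k + 1) x ≤ ‖δseq (k + 1)‖ := by
    intro x
    have h2 : ‖δseq (k + 1) x‖ ≤ ‖δseq (k + 1)‖ := norm_le_pi_norm (δseq (k + 1)) x
    rw [Real.norm_eq_abs] at h2
    exact (le_abs_self _).trans h2
  constructor
  · -- lower bound
    obtain ⟨p, hp⟩ := Finite.exists_max
      (fun s : X × A => Qof (μseq k) s.1 s.2 - (Qseq (k + 1) - ε k) s.1 s.2)
    set m := Qof (μseq k) p.1 p.2 - (Qseq (k + 1) - ε k) p.1 p.2 with hm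
    have hQle : ∀ x a, Qof (μseq k) x a ≤ (Qseq (k + 1) - ε k) x a + m := by
      intro x a
      have := hp (x, a)
      simp only at this
      linarith
    have hkey : Qof (μseq k) p.1 p.2
        = bellman P r γ (μseq k) (Qof (μseq k)) p.1 p.2 :=
      (congrFun (congrFun (hQof _ (hμpol k)) p.1) p.2).symm
    have hchain : Qof (μseq k) p.1 p.2 ≤ (Qseq (k + 1) - ε k) p.1 p.2 + γ * m := by
      calc Qof (μseq k) p.1 p.2
          = bellman P r γ (μseq k) (Qof (μseq k)) p.1 p.2 := hkey
        _ ≤ bellman P r γ (μseq k) (fun x a => (Qseq (k + 1) - ε k) x a + m) p.1 p.2 :=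
            aux_bellman_mono hP hγ0 (hμpol k) hQle p.1 p.2
        _ = bellman P r γ (μseq k) (Qseq (k + 1) - ε k) p.1 p.2 + γ * m :=
            aux_bellman_shift hP r γ (hμpol k) _ m p.1 p.2
        _ ≤ (Qseq (k + 1) - ε k) p.1 p.2 + γ * m := by
            linarith [hTB_le_B p.1 p.2]
    have hm0 : m ≤ 0 := by nlinarith
    simp only [Pi.le_def]
    intro x a
    have h1 := hQle x a
    have h2 := hεabs x a
    have h3 := hBapp x a
    have h4 := abs_le.1 h2
    linarith
  · -- upper bound
    obtain ⟨q, hq⟩ := Finite.exists_max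
      (fun s : X × A => Qseq (k + 1) s.1 s.2 - Qof (μseq (k + 1)) s.1 s.2)
    set m := Qseq (k + 1) q.1 q.2 - Qof (μseq (k + 1)) q.1 q.2 with hm
    have hQle : ∀ x a, Qseq (k + 1) x a ≤ Qof (μseq (k + 1)) x a + m := by
      intro x a
      have := hq (x, a)
      simp only at this
      linarith
    have hgr : ∀ y, (⨆ b, Qseq (k + 1) y b)
        ≤ polQ (μseq (k + 1)) (Qseq (k + 1)) y + ‖δseq (k + 1)‖ := by
      intro y
      have h1 := hδgreedy (k + 1) y
      have h2 := hδabs y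
      linarith
    have hBle : ∀ x a, (Qseq (k + 1) - ε k) x a ≤ Qseq (k + 1) x a + ‖ε k‖ := by
      intro x a
      have h2 := abs_le.1 (hεabs x a)
      have h3 := hBapp x a
      linarith
    have hkey : bellman P r γ (μseq (k + 1)) (Qof (μseq (k + 1))) q.1 q.2
        = Qof (μseq (k + 1)) q.1 q.2 :=
      congrFun (congrFun (hQof _ (hμpol (k + 1))) q.1) q.2
    have hchain : Qseq (k + 1) q.1 q.2 ≤ Qof (μseq (k + 1)) q.1 q.2 + γ * m
        + γ * ‖δseq (k + 1)‖ + γ * ‖ε k‖ + ‖ε k‖ := by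
      have c1 : Qseq (k + 1) q.1 q.2 ≤ (Qseq (k + 1) - ε k) q.1 q.2 + ‖ε k‖ := by
        have h2 := abs_le.1 (hεabs q.1 q.2)
        have h3 := hBapp q.1 q.2
        linarith
      have c2 : (Qseq (k + 1) - ε k) q.1 q.2
          ≤ optBellman P r γ (Qseq (k + 1) - ε k) q.1 q.2 := hB_le_TB q.1 q.2
      have c3 : optBellman P r γ (Qseq (k + 1) - ε k) q.1 q.2
          ≤ optBellman P r γ (fun x a => Qseq (k + 1) x a + ‖ε k‖) q.1 q.2 :=
        aux_opt_mono hP r hγ0 hBle q.1 q.2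
      have c4 : optBellman P r γ (fun x a => Qseq (k + 1) x a + ‖ε k‖) q.1 q.2
          = optBellman P r γ (Qseq (k + 1)) q.1 q.2 + γ * ‖ε k‖ :=
        aux_opt_shift hP r γ _ _ q.1 q.2
      have c5 : optBellman P r γ (Qseq (k + 1)) q.1 q.2
          ≤ bellman P r γ (μseq (k + 1)) (Qseq (k + 1)) q.1 q.2 + γ * ‖δseq (k + 1)‖ :=
        aux_opt_le_bellman_add hP r hγ0 hgr q.1 q.2
      have c6 : bellman P r γ (μseq (k + 1)) (Qseq (k + 1)) q.1 q.2
          ≤ bellman P r γ (μseq (k + 1)) (fun x a => Qof (μseq (k + 1)) x a + m) q.1 q.2 :=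
        aux_bellman_mono hP hγ0 (hμpol (k + 1)) hQle q.1 q.2
      have c7 : bellman P r γ (μseq (k + 1)) (fun x a => Qof (μseq (k + 1)) x a + m) q.1 q.2
          = bellman P r γ (μseq (k + 1)) (Qof (μseq (k + 1))) q.1 q.2 + γ * m :=
        aux_bellman_shift hP r γ (hμpol (k + 1)) _ m q.1 q.2
      rw [c7, hkey] at c6
      linarith
    have h1γ : (0 : ℝ) < 1 - γ := by linarith
    have hmle : m ≤ (γ * ‖δseq (k + 1)‖ + (1 + γ) * ‖ε k‖) / (1 - γ) := by
      rw [le_div_iff₀ h1γ]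
      nlinarith
    have heq : ((1 + γ) / (1 - γ)) * ‖ε k‖ + (γ / (1 - γ)) * ‖δseq (k + 1)‖
        = (γ * ‖δseq (k + 1)‖ + (1 + γ) * ‖ε k‖) / (1 - γ) := by
      field_simp
      ring
    simp only [Pi.le_def]
    intro x a
    have h1 := hQle x a
    have h2 : m ≤ ((1 + γ) / (1 - γ)) * ‖ε k‖ + (γ / (1 - γ)) * ‖δseq (k + 1)‖ :=
      heq ▸ hmle
    linarith
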